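/- Let I₁, …, Iₙ be ideals over Σ, each given by a reduced representation of length at most k, and let μ_k be the weight function with μ_k(a°) = 1 and μ_k(Δ*) = (k+1)^{|Δ|}, extended additively. If I_m has maximal μ_k-weight among I₁,…,Iₙ and I₁ ∪ ⋯ ∪ Iₙ is itself an ideal, then I₁ ∪ ⋯ ∪ Iₙ = I_m. -/

import Mathlib

def IsDirectedLang {A : Type*} (L : Set (List A)) : Prop :=
  ∀ u ∈ L, ∀ v ∈ L, ∃ w ∈ L, u.Sublist w ∧ v.Sublist w

def dcl {A : Type*} (L : Set (List A)) : Set (List A) := {u | ∃ v ∈ L, u.Sublist v}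

def DownwardClosed {A : Type*} (D : Set (List A)) : Prop :=
  ∀ u v : List A, u.Sublist v → v ∈ D → u ∈ D

def IsIdeal {A : Type*} (I : Set (List A)) : Prop :=
  I.Nonempty ∧ DownwardClosed I ∧ IsDirectedLang I

inductive Atom (A : Type*) where
  | single : A → Atom A
  | alph : Finset A → Atom A

def Atom.lang {A : Type*} : Atom A → Set (List A)
  | .single a => {[], [a]}
  | .alph d => {w | ∀ c ∈ w, c ∈ d}

def Atom.Valid {A : Type*} : Atom A → Prop
  | .single _ => True
  | .alph d => d.Nonempty

def conc {A : Type*} (L M : Set (List A)) : Set (List A) :=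
  {w | ∃ u ∈ L, ∃ v ∈ M, w = u ++ v}

def Idl {A : Type*} : List (Atom A) → Set (List A)
  | [] => {[]}
  | α :: r => conc α.lang (Idl r)

def LeftAbsorbs {A : Type*} (α β : Atom A) : Prop := Idl [α, β] = Idl [α]
def RightAbsorbs {A : Type*} (α β : Atom A) : Prop := Idl [α, β] = Idl [β]
def Absorptive {A : Type*} (α β : Atom A) : Prop := LeftAbsorbs α β ∨ RightAbsorbs α β
def Reduced {A : Type*} (r : List (Atom A)) : Prop := r.Chain' fun α β => ¬ Absorptive α β

def atomWeight {A : Type*} (k : ℕ) : Atom A → ℕ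
  | .single _ => 1
  | .alph d => (k+1) ^ d.card

def repWeight {A : Type*} (k : ℕ) (r : List (Atom A)) : ℕ := (r.map (atomWeight k)).sum

section Aux
variable {A : Type*}

open List

lemma nil_mem_atom (α : Atom A) : [] ∈ α.lang := by
  cases α <;> simp [Atom.lang]

lemma nil_mem_Idl (r : List (Atom A)) : [] ∈ Idl r := by
  induction r with
  | nil => simp [Idl]
  | cons α r ih => exact ⟨[], nil_mem_atom α, [], ih, rfl⟩

lemma atom_down (α : Atom A) : DownwardClosed α.lang := by
  intro u v huv hv
  cases α with
  | single a =>
    rcases hv with h | h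
    · subst h; simp [List.sublist_nil.mp huv, Atom.lang]
    · subst h
      rcases List.sublist_singleton.mp huv with h | h <;> subst h <;> simp [Atom.lang]
  | alph d => exact fun c hc => hv c (huv.subset hc)

lemma single_lang_cases {a : A} {x : List A} (h : x ∈ (Atom.single a).lang) :
    x = [] ∨ x = [a] := by
  simpa [Atom.lang, Set.mem_insert_iff] using h

lemma atom_directed (α : Atom A) : IsDirectedLang α.lang := by
  intro u hu v hv
  cases α with
  | single a =>
    refine ⟨[a], by simp [Atom.lang], ?_, ?_⟩
    · rcases hu with h | h <;> subst h <;> simp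
    · rcases hv with h | h <;> subst h <;> simp
  | alph d =>
    refine ⟨u ++ v, ?_, List.sublist_append_left u v, List.sublist_append_right u v⟩
    intro c hc
    rcases List.mem_append.mp hc with h | h
    · exact hu c h
    · exact hv c h

lemma conc_down {L M : Set (List A)} (hL : DownwardClosed L) (hM : DownwardClosed M) :
    DownwardClosed (conc L M) := by
  rintro u w huw ⟨x, hx, y, hy, rfl⟩
  obtain ⟨u₁, u₂, rfl, h1, h2⟩ := List.sublist_append_iff.mp huw
  exact ⟨u₁, hL _ _ h1 hx, u₂, hM _ _ h2 hy, rfl⟩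

lemma conc_directed {L M : Set (List A)} (hL : IsDirectedLang L) (hM : IsDirectedLang M) :
    IsDirectedLang (conc L M) := by
  rintro u ⟨u₁, hu₁, u₂, hu₂, rfl⟩ v ⟨v₁, hv₁, v₂, hv₂, rfl⟩
  obtain ⟨w₁, hw₁, h11, h12⟩ := hL u₁ hu₁ v₁ hv₁
  obtain ⟨w₂, hw₂, h21, h22⟩ := hM u₂ hu₂ v₂ hv₂
  exact ⟨w₁ ++ w₂, ⟨w₁, hw₁, w₂, hw₂, rfl⟩, h11.append h21, h12.append h22⟩

lemma Idl_down (r : List (Atom A)) : DownwardClosed (Idl r) := by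
  induction r with
  | nil => intro u v huv hv; simp only [Idl, Set.mem_singleton_iff] at *; subst hv
           exact List.sublist_nil.mp huv
  | cons α r ih => exact conc_down (atom_down α) ih

lemma Idl_directed (r : List (Atom A)) : IsDirectedLang (Idl r) := by
  induction r with
  | nil => intro u hu v hv; simp only [Idl, Set.mem_singleton_iff] at *
           subst hu; subst hv; exact ⟨[], rfl, by simp, by simp⟩
  | cons α r ih => exact conc_directed (atom_directed α) ih

lemma Idl_isIdeal (r : List (Atom A)) : IsIdeal (Idl r) :=
  ⟨⟨[], nil_mem_Idl r⟩, Idl_down r, Idl_directed r⟩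

lemma Idl_subset_cons (α : Atom A) (r : List (Atom A)) : Idl r ⊆ Idl (α :: r) :=
  fun v hv => ⟨[], nil_mem_atom α, v, hv, by simp⟩

lemma mem_Idl_cons {α : Atom A} {r : List (Atom A)} {x v : List A}
    (hx : x ∈ α.lang) (hv : v ∈ Idl r) : x ++ v ∈ Idl (α :: r) :=
  ⟨x, hx, v, hv, rfl⟩

lemma atom_valid_word {α : Atom A} (h : α.Valid) : ∃ c, [c] ∈ α.lang := by
  cases α with
  | single a => exact ⟨a, by simp [Atom.lang]⟩
  | alph d => obtain ⟨c, hc⟩ := h; exact ⟨c, by simp [Atom.lang, hc]⟩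

lemma Idl_singleton (β : Atom A) : Idl [β] = β.lang := by
  ext w
  constructor
  · rintro ⟨u, hu, v, hv, rfl⟩
    simp only [Idl, Set.mem_singleton_iff] at hv; subst hv; simpa using hu
  · intro h; exact ⟨w, h, [], rfl, by simp⟩

lemma alph_append {Δ : Finset A} {u v : List A} (hu : u ∈ (Atom.alph Δ).lang)
    (hv : v ∈ (Atom.alph Δ).lang) : u ++ v ∈ (Atom.alph Δ).lang := by
  intro c hc; rcases List.mem_append.mp hc with h | h; exacts [hu c h, hv c h]

lemma left_absorb {Δ : Finset A} {γ : Atom A} (h : γ.lang ⊆ (Atom.alph Δ).lang) :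
    LeftAbsorbs (Atom.alph Δ) γ := by
  unfold LeftAbsorbs
  rw [Idl_singleton]
  ext w
  constructor
  · rintro ⟨u, hu, v, hv, rfl⟩
    rw [Idl_singleton] at hv
    exact alph_append hu (h hv)
  · intro hw
    exact ⟨w, hw, [], by rw [Idl_singleton]; exact nil_mem_atom γ, by simp⟩

lemma right_absorb {Δ : Finset A} {γ : Atom A} (h : γ.lang ⊆ (Atom.alph Δ).lang) :
    RightAbsorbs γ (Atom.alph Δ) := by
  unfold RightAbsorbs
  rw [Idl_singleton]
  ext w
  constructor
  · rintro ⟨u, hu, v, hv, rfl⟩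
    rw [Idl_singleton] at hv
    exact alph_append (h hu) hv
  · intro hw
    exact ⟨[], nil_mem_atom γ, w, by rw [Idl_singleton]; exact hw, by simp⟩

end Aux

section Aux2
variable {A : Type*}

open List

/-- If `Idl (γ::t) ⊆ Idl (Γ*::Q)` but not `⊆ Idl Q`, then `γ.lang ⊆ Γ*`. -/
lemma head_alph {Γ : Finset A} {Q : List (Atom A)} {γ : Atom A} {t : List (Atom A)}
    (hsub : Idl (γ :: t) ⊆ Idl (Atom.alph Γ :: Q))
    {w₀ : List A} (hw₀ : w₀ ∈ Idl (γ :: t)) (hw₀Q : w₀ ∉ Idl Q) :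
    γ.lang ⊆ (Atom.alph Γ).lang := by
  obtain ⟨x₀, hx₀, v₀, hv₀, rfl⟩ := hw₀
  cases γ with
  | single a =>
    have hu : (a :: v₀) ∈ Idl (Atom.single a :: t) :=
      ⟨[a], by simp [Atom.lang], v₀, hv₀, rfl⟩
    have hle : x₀ ++ v₀ <+ a :: v₀ := by
      rcases single_lang_cases hx₀ with rfl | rfl <;> simp
    have huQ : (a :: v₀) ∉ Idl Q := fun h => hw₀Q (Idl_down Q _ _ hle h)
    obtain ⟨y, hy, z, hz, hyz⟩ := hsub hu
    match y, hyz with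
    | [], hyz => exact absurd (by rw [hyz]; simpa using hz) huQ
    | c :: y', hyz =>
      have hc : c ∈ Γ := hy c (by simp)
      have hac : a = c := by
        have : a :: v₀ = c :: (y' ++ z) := by simpa using hyz
        exact (List.cons.injEq _ _ _ _ ▸ this).1
      subst hac
      intro w hw
      rcases single_lang_cases hw with rfl | rfl
      · exact fun c hc => absurd hc List.not_mem_nil
      · intro b hb; simp only [List.mem_singleton] at hb; subst hb; exact hc
  | alph Δ =>
    intro w hw
    intro d hd
    have hdΔ : d ∈ Δ := hw d hd
    have hx₀' : (d :: x₀) ∈ (Atom.alph Δ).lang := by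
      intro c hc
      rcases List.mem_cons.mp hc with h | h
      · subst h; exact hdΔ
      · exact hx₀ c h
    have hu : (d :: x₀ ++ v₀) ∈ Idl (Atom.alph Δ :: t) := mem_Idl_cons hx₀' hv₀
    have hle : x₀ ++ v₀ <+ d :: x₀ ++ v₀ := by simp
    have huQ : (d :: x₀ ++ v₀) ∉ Idl Q := fun h => hw₀Q (Idl_down Q _ _ hle h)
    obtain ⟨y, hy, z, hz, hyz⟩ := hsub hu
    match y, hyz with
    | [], hyz => exact absurd (by rw [hyz]; simpa using hz) huQ
    | c :: y', hyz =>
      have hc : c ∈ Γ := hy c (by simp)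
      have : d = c := by
        have : d :: (x₀ ++ v₀) = c :: (y' ++ z) := by simpa using hyz
        exact (List.cons.injEq _ _ _ _ ▸ this).1
      subst this; exact hc

/-- Characterization for a single-letter atom on the right. -/
lemma char_single {b : A} {Q : List (Atom A)} {α : Atom A} {P : List (Atom A)}
    (hval : α.Valid)
    (hsub : Idl (α :: P) ⊆ Idl (Atom.single b :: Q)) :
    Idl (α :: P) ⊆ Idl Q ∨ (α = Atom.single b ∧ Idl P ⊆ Idl Q) := by
  by_cases hQ : Idl (α :: P) ⊆ Idl Q
  · exact Or.inl hQ
  right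
  rw [Set.not_subset] at hQ
  obtain ⟨w₀, hw₀, hw₀Q⟩ := hQ
  cases α with
  | alph Δ =>
    exfalso
    obtain ⟨d, hd⟩ := hval
    apply hw₀Q
    obtain ⟨x, hx, v, hv, rfl⟩ := hw₀
    have hx' : (d :: d :: x) ∈ (Atom.alph Δ).lang := by
      intro c hc
      rcases List.mem_cons.mp hc with h | h
      · subst h; exact hd
      rcases List.mem_cons.mp h with h | h
      · subst h; exact hd
      · exact hx c h
    have hu : (d :: d :: x ++ v) ∈ Idl (Atom.alph Δ :: P) := mem_Idl_cons hx' hv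
    obtain ⟨y, hy, z, hz, hyz⟩ := hsub hu
    rcases single_lang_cases hy with rfl | rfl
    · simp only [List.nil_append] at hyz
      exact Idl_down Q _ _ (by rw [← hyz]; simp) hz
    · have : d :: (d :: (x ++ v)) = b :: z := by simpa using hyz
      have hz' : z = d :: (x ++ v) := ((List.cons.injEq _ _ _ _).mp this).2.symm ▸ rfl
      subst hz'
      exact Idl_down Q _ _ (by simp) hz
  | single a =>
    obtain ⟨x₀, hx₀, v₀, hv₀, rfl⟩ := hw₀
    have hle : x₀ ++ v₀ <+ a :: v₀ := by
      rcases single_lang_cases hx₀ with rfl | rfl <;> simp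
    have hu : (a :: v₀) ∈ Idl (Atom.single a :: P) := ⟨[a], by simp [Atom.lang], v₀, hv₀, rfl⟩
    have huQ : (a :: v₀) ∉ Idl Q := fun h => hw₀Q (Idl_down Q _ _ hle h)
    obtain ⟨y, hy, z, hz, hyz⟩ := hsub hu
    have hab : a = b := by
      rcases single_lang_cases hy with rfl | rfl
      · exact absurd (by rw [hyz]; simpa using hz) huQ
      · have : a :: v₀ = b :: z := by simpa using hyz
        exact ((List.cons.injEq _ _ _ _).mp this).1
    subst hab
    refine ⟨rfl, fun v hv => ?_⟩
    obtain ⟨w, hw, h1, h2⟩ := Idl_directed (Atom.single a :: P) (a :: v)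
      ⟨[a], by simp [Atom.lang], v, hv, rfl⟩ (a :: v₀) hu
    obtain ⟨y', hy', z', hz', hyz'⟩ := hsub hw
    rcases single_lang_cases hy' with rfl | rfl
    · exfalso
      apply huQ
      exact Idl_down Q _ _ h2 (by rw [hyz']; simpa using hz')
    · have hw' : w = a :: z' := by rw [hyz']; simp
      rw [hw'] at h1
      exact Idl_down Q _ _ (List.cons_sublist_cons.mp h1) hz'

/-- Peeling lemma for an alphabet atom on the right. -/
lemma peel {Γ : Finset A} {Q : List (Atom A)} :
    ∀ t : List (Atom A), Idl t ⊆ Idl (Atom.alph Γ :: Q) →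
    ∃ j, j ≤ t.length ∧ (∀ γ ∈ t.take j, γ.lang ⊆ (Atom.alph Γ).lang) ∧
      Idl (t.drop j) ⊆ Idl Q := by
  intro t
  induction t with
  | nil =>
    intro _
    refine ⟨0, le_refl _, by simp, ?_⟩
    intro w hw
    simp only [List.drop_nil, Idl, Set.mem_singleton_iff] at hw
    subst hw; exact nil_mem_Idl Q
  | cons γ t' ih =>
    intro hsub
    by_cases hQ : Idl (γ :: t') ⊆ Idl Q
    · exact ⟨0, Nat.zero_le _, by simp, hQ⟩
    · rw [Set.not_subset] at hQ
      obtain ⟨w₀, hw₀, hw₀Q⟩ := hQ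
      have hγ : γ.lang ⊆ (Atom.alph Γ).lang := head_alph hsub hw₀ hw₀Q
      obtain ⟨j', hj', hall, hdrop⟩ := ih ((Idl_subset_cons γ t').trans hsub)
      refine ⟨j' + 1, by simpa using hj', ?_, by simpa using hdrop⟩
      intro δ hδ
      simp only [List.take_succ_cons, List.mem_cons] at hδ
      rcases hδ with h | h
      · subst h; exact hγ
      · exact hall δ h

/-- In a reduced list whose atoms all have language inside `Γ*`, if `Γ*` occurs
then the list is exactly `[Γ*]`. -/
lemma reduced_all_sub {Γ : Finset A} :
    ∀ l : List (Atom A), Reduced l → (∀ γ ∈ l, γ.lang ⊆ (Atom.alph Γ).lang) →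
    Atom.alph Γ ∈ l → l = [Atom.alph Γ] := by
  intro l
  induction l with
  | nil => intro _ _ h; exact absurd h List.not_mem_nil
  | cons x l ih =>
    intro hred hall hmem
    by_cases hx : x = Atom.alph Γ
    · subst hx
      cases l with
      | nil => rfl
      | cons γ l'' =>
        exfalso
        have habs : Absorptive (Atom.alph Γ) γ :=
          Or.inl (left_absorb (hall γ (by simp)))
        exact (List.isChain_cons_cons.mp hred).1 habs
    · have hmem' : Atom.alph Γ ∈ l := by
        rcases List.mem_cons.mp hmem with h | h
        · exact absurd h.symm hx
        · exact h
      have hl : l = [Atom.alph Γ] :=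
        ih hred.tail (fun γ hγ => hall γ (List.mem_cons_of_mem _ hγ)) hmem'
      exfalso
      rw [hl] at hred
      have habs : Absorptive x (Atom.alph Γ) :=
        Or.inr (right_absorb (hall x (by simp)))
      exact (List.isChain_cons_cons.mp hred).1 habs

end Aux2

section Aux3
variable {A : Type*}

open List

lemma atomWeight_pos (k : ℕ) (α : Atom A) : 1 ≤ atomWeight k α := by
  cases α with
  | single a => exact le_refl 1
  | alph d => exact Nat.one_le_pow _ _ (Nat.succ_pos k)

lemma repWeight_cons (k : ℕ) (α : Atom A) (r : List (Atom A)) :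
    repWeight k (α :: r) = atomWeight k α + repWeight k r := by
  simp [repWeight]

lemma repWeight_append (k : ℕ) (r s : List (Atom A)) :
    repWeight k (r ++ s) = repWeight k r + repWeight k s := by
  simp [repWeight]

lemma Idl_cons_congr {α : Atom A} {r s : List (Atom A)} (h : Idl r = Idl s) :
    Idl (α :: r) = Idl (α :: s) := by
  show conc α.lang (Idl r) = conc α.lang (Idl s)
  rw [h]

lemma alph_lang_subset {Δ Γ : Finset A} (h : (Atom.alph Δ : Atom A).lang ⊆ (Atom.alph Γ).lang) :
    Δ ⊆ Γ := by
  intro d hd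
  have : [d] ∈ (Atom.alph Δ : Atom A).lang := by
    intro c hc; simp only [List.mem_singleton] at hc; subst hc; exact hd
  have := h this
  exact this d (by simp)

/-- Weak and strict monotonicity of `repWeight` for reduced representations. -/
lemma mono_weight (k : ℕ) : ∀ N : ℕ, ∀ r s : List (Atom A), r.length + s.length ≤ N →
    (∀ α ∈ r, α.Valid) → (∀ α ∈ s, α.Valid) → Reduced r → Reduced s →
    r.length ≤ k → s.length ≤ k → Idl r ⊆ Idl s →
    repWeight k r ≤ repWeight k s ∧ (Idl r ≠ Idl s → repWeight k r < repWeight k s) := by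
  intro N
  induction N with
  | zero =>
    intro r s hN _ _ _ _ _ _ _
    have hr : r = [] := List.length_eq_zero_iff.mp (by omega)
    have hs : s = [] := List.length_eq_zero_iff.mp (by omega)
    subst hr; subst hs
    exact ⟨le_refl _, fun h => absurd rfl h⟩
  | succ N ih =>
    intro r s hN hvr hvs hredr hreds hlr hls hsub
    cases s with
    | nil =>
      cases r with
      | nil => exact ⟨le_refl _, fun h => absurd rfl h⟩
      | cons α r' =>
        exfalso
        obtain ⟨c, hc⟩ := atom_valid_word (hvr α (by simp))
        have : [c] ∈ Idl (α :: r') := by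
          have := mem_Idl_cons (r := r') hc (nil_mem_Idl r')
          simpa using this
        have := hsub this
        simp [Idl] at this
    | cons β s' =>
      have hβpos : 1 ≤ atomWeight k β := atomWeight_pos k β
      have hvs' : ∀ α ∈ s', α.Valid := fun α hα => hvs α (List.mem_cons_of_mem _ hα)
      have hreds' : Reduced s' := hreds.tail
      have hls' : s'.length ≤ k := le_trans (by simp) hls
      cases β with
      | single b =>
        cases r with
        | nil =>
          have e0 : repWeight k ([] : List (Atom A)) = 0 := rfl
          have e1 := repWeight_cons k (Atom.single b) s'
          exact ⟨by omega, fun _ => by omega⟩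
        | cons α r' =>
          have hvr' : ∀ γ ∈ r', γ.Valid := fun γ hγ => hvr γ (List.mem_cons_of_mem _ hγ)
          have hredr' : Reduced r' := hredr.tail
          have hlr' : r'.length ≤ k := le_trans (by simp) hlr
          have e1 := repWeight_cons k (Atom.single b) s'
          rcases char_single (hvr α (by simp)) hsub with hcase | ⟨rfl, hPQ⟩
          · -- Idl (α::r') ⊆ Idl s'
            have hw := (ih (α :: r') s' (by simp at hN ⊢; omega)
              hvr hvs' hredr hreds' hlr hls' hcase).1
            exact ⟨by omega, fun _ => by omega⟩
          · -- α = single b, Idl r' ⊆ Idl s'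
            obtain ⟨hw, hst⟩ := ih r' s' (by simp at hN ⊢; omega)
              hvr' hvs' hredr' hreds' hlr' hls' hPQ
            have e2 := repWeight_cons k (Atom.single b) r'
            constructor
            · omega
            · intro hne
              have hne' : Idl r' ≠ Idl s' := fun h => hne (Idl_cons_congr h)
              have := hst hne'
              omega
      | alph Γ =>
        have hΓpos : 1 ≤ Γ.card := Finset.card_pos.mpr (hvs (Atom.alph Γ) (by simp))
        obtain ⟨j, hj, hall, hdrop⟩ := peel r hsub
        by_cases hmem : Atom.alph Γ ∈ r.take j
        · -- r begins with Γ* itself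
          have hredtake : Reduced (r.take j) := hredr.prefix (List.take_prefix j r)
          have htake : r.take j = [Atom.alph Γ] := reduced_all_sub _ hredtake hall hmem
          -- j = 1
          have hj1 : j = 1 := by
            have := congrArg List.length htake
            simp only [List.length_take, List.length_singleton] at this
            omega
          subst hj1
          cases r with
          | nil => simp at htake
          | cons α r' =>
            have hα : α = Atom.alph Γ := by simpa using htake
            subst hα
            have hdrop' : Idl r' ⊆ Idl s' := by simpa using hdrop
            have hvr' : ∀ γ ∈ r', γ.Valid := fun γ hγ => hvr γ (List.mem_cons_of_mem _ hγ)
            obtain ⟨hw, hst⟩ := ih r' s' (by simp at hN ⊢; omega)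
              hvr' hvs' hredr.tail hreds' (le_trans (by simp) hlr) hls' hdrop'
            have e1 := repWeight_cons k (Atom.alph Γ) s'
            have e2 := repWeight_cons k (Atom.alph Γ) r'
            constructor
            · omega
            · intro hne
              have hne' : Idl r' ≠ Idl s' := fun h => hne (Idl_cons_congr h)
              have := hst hne'
              omega
        · -- every atom in the prefix has small weight
          have hsmall : ∀ γ ∈ r.take j, atomWeight k γ ≤ (k+1) ^ (Γ.card - 1) := by
            intro γ hγ
            have hlang := hall γ hγ
            cases γ with
            | single a => exact Nat.one_le_pow _ _ (Nat.succ_pos k)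
            | alph Δ =>
              have hΔΓ : Δ ⊆ Γ := alph_lang_subset hlang
              have hne : Δ ≠ Γ := by
                intro h; subst h; exact hmem hγ
              have : Δ.card < Γ.card := Finset.card_lt_card (hΔΓ.ssubset_of_ne hne)
              exact Nat.pow_le_pow_right (Nat.succ_pos k) (by omega)
          have hbound : repWeight k (r.take j) ≤ k * (k+1) ^ (Γ.card - 1) := by
            have h1 : ((r.take j).map (atomWeight k)).sum ≤
                ((r.take j).map (atomWeight k)).length • ((k+1) ^ (Γ.card - 1)) := by
              apply List.sum_le_card_nsmul
              intro x hx
              obtain ⟨γ, hγ, rfl⟩ := List.mem_map.mp hx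
              exact hsmall γ hγ
            have h2 : ((r.take j).map (atomWeight k)).length ≤ k := by
              simp only [List.length_map, List.length_take]
              omega
            calc repWeight k (r.take j) ≤ _ := h1
              _ ≤ k * (k+1) ^ (Γ.card - 1) := by
                  rw [smul_eq_mul]
                  exact Nat.mul_le_mul_right _ h2
          have hdropred : Reduced (r.drop j) := hredr.suffix (List.drop_suffix j r)
          have hvdrop : ∀ γ ∈ r.drop j, γ.Valid := fun γ hγ =>
            hvr γ (List.mem_of_mem_drop hγ)
          have hldrop : (r.drop j).length ≤ k := by
            rw [List.length_drop]; omega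
          have hdw := (ih (r.drop j) s' (by simp at hN ⊢; omega)
            hvdrop hvs' hdropred hreds' hldrop hls' hdrop).1
          have hsplit : repWeight k r = repWeight k (r.take j) + repWeight k (r.drop j) := by
            conv_lhs => rw [← List.take_append_drop j r]
            exact repWeight_append k _ _
          have hpow : k * (k+1) ^ (Γ.card - 1) < (k+1) ^ Γ.card := by
            have : (k+1) ^ Γ.card = (k+1) ^ (Γ.card - 1) * (k+1) := by
              rw [← pow_succ]
              congr 1
              omega
            rw [this]
            have hp : 0 < (k+1) ^ (Γ.card - 1) := Nat.pow_pos (Nat.succ_pos k)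
            calc k * (k+1) ^ (Γ.card - 1) < (k+1) * (k+1) ^ (Γ.card - 1) := by
                  exact (Nat.mul_lt_mul_right hp).mpr (Nat.lt_succ_self k)
              _ = (k+1) ^ (Γ.card - 1) * (k+1) := by ring
          have hstrict : repWeight k r < repWeight k (Atom.alph Γ :: s') := by
            have e1 := repWeight_cons k (Atom.alph Γ) s'
            have e2 : atomWeight k (Atom.alph Γ : Atom A) = (k+1) ^ Γ.card := rfl
            omega
          exact ⟨le_of_lt hstrict, fun _ => hstrict⟩

lemma ideal_upper_bound {I : Set (List A)} (hI : IsIdeal I) :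
    ∀ l : List (List A), (∀ u ∈ l, u ∈ I) → ∃ w ∈ I, ∀ u ∈ l, u.Sublist w := by
  intro l
  induction l with
  | nil =>
    intro _
    obtain ⟨w, hw⟩ := hI.1
    exact ⟨w, hw, by simp⟩
  | cons x l ih =>
    intro h
    obtain ⟨w', hw', hub⟩ := ih (fun u hu => h u (List.mem_cons_of_mem _ hu))
    obtain ⟨w, hw, h1, h2⟩ := hI.2.2 x (h x (by simp)) w' hw'
    refine ⟨w, hw, ?_⟩
    intro u hu
    rcases List.mem_cons.mp hu with h | h
    · subst h; exact h1
    · exact (hub u h).trans h2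

lemma ideal_prime {n : ℕ} {I : Set (List A)} (hI : IsIdeal I) (D : Fin n → Set (List A))
    (hD : ∀ i, DownwardClosed (D i)) (hsub : I ⊆ ⋃ i, D i) : ∃ i, I ⊆ D i := by
  by_contra hcon
  push_neg at hcon
  have hwit : ∀ i, ∃ u ∈ I, u ∉ D i := by
    intro i
    obtain ⟨u, hu, hu'⟩ := Set.not_subset.mp (hcon i)
    exact ⟨u, hu, hu'⟩
  choose u hu hnd using hwit
  obtain ⟨w, hw, hub⟩ := ideal_upper_bound hI ((List.finRange n).map u)
    (by intro v hv; obtain ⟨i, _, rfl⟩ := List.mem_map.mp hv; exact hu i)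
  obtain ⟨Di, ⟨i, rfl⟩, hwDi⟩ := hsub hw
  exact hnd i (hD i _ _ (hub (u i) (List.mem_map.mpr ⟨i, List.mem_finRange i, rfl⟩)) hwDi)

end Aux3

theorem max_weight_ideal_is_union {A : Type*} (k n : ℕ)
    (r : Fin n → List (Atom A))
    (hv : ∀ i, ∀ α ∈ r i, α.Valid) (hred : ∀ i, Reduced (r i))
    (hlen : ∀ i, (r i).length ≤ k)
    (m : Fin n) (hmax : ∀ i, repWeight k (r i) ≤ repWeight k (r m))
    (hideal : IsIdeal (⋃ i, Idl (r i))) :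
    (⋃ i, Idl (r i)) = Idl (r m) := by
  obtain ⟨j, hj⟩ := ideal_prime hideal (fun i => Idl (r i)) (fun i => Idl_down _)
    (subset_refl _)
  have h1 : Idl (r m) ⊆ Idl (r j) := (Set.subset_iUnion (fun i => Idl (r i)) m).trans hj
  have heq : Idl (r m) = Idl (r j) := by
    by_contra hne
    have := (mono_weight k ((r m).length + (r j).length) (r m) (r j) le_rfl
      (hv m) (hv j) (hred m) (hred j) (hlen m) (hlen j) h1).2 hne
    have := hmax j
    omega
  apply Set.Subset.antisymm
  · exact hj.trans heq.symm.subset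
  · exact Set.subset_iUnion (fun i => Idl (r i)) m
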